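/- There exists a finite MDP with agent rewards such that no deterministic policy satisfies the demographic parity constraint, but some stochastic policy does. -/

import Mathlib

/-- The transition matrix over states induced by a stochastic policy. -/
def indTrans {S A : Type*} [Fintype A] (π : S → A → ℝ) (P : S → A → S → ℝ)
    (s s' : S) : ℝ :=
  ∑ a, π s a * P s a s'

/-- The state distribution at time `t` induced by policy `π`, transitions `P`,
and initial distribution `D`. -/
def distAt {S A : Type*} [Fintype S] [Fintype A] (π : S → A → ℝ)
    (P : S → A → S → ℝ) (D : S → ℝ) : ℕ → S → ℝ
  | 0 => D
  | t + 1 => fun s' => ∑ s, distAt π P D t s * indTrans π P s s'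

/-- The expected discounted cumulative agent reward of policy `π` starting from
initial state distribution `D`. -/
noncomputable def agentVal {S A : Type*} [Fintype S] [Fintype A] (π : S → A → ℝ)
    (P : S → A → S → ℝ) (ρ : S → A → ℝ) (γ : ℝ) (D : S → ℝ) : ℝ :=
  (1 - γ) * ∑' t : ℕ, γ ^ t * ∑ s, distAt π P D t s * ∑ a, π s a * ρ s a


def myP : Fin 5 → Fin 2 → Fin 5 → ℝ := fun s a s' =>
  if s = 0 ∨ s = 1 then (if s' = 1 then 1 else 0)
  else if s = 2 then (if s' = (if a = 0 then 3 else 4) then 1 else 0)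
  else if s = 3 then (if s' = 3 then 1 else 0)
  else (if s' = 4 then 1 else 0)

def myρ : Fin 5 → Fin 2 → ℝ := fun s _ =>
  if s = 1 then 1 else if s = 4 then 2 else 0

def Dmaj0 : Fin 5 → ℝ := fun s => if s = 0 then 1 else 0
def Dmin0 : Fin 5 → ℝ := fun s => if s = 2 then 1 else 0

lemma tsum_key (r : ℝ) (f : ℕ → ℝ) (h0 : f 0 = 0)
    (h : ∀ t, f (t + 1) = (1/2 : ℝ) ^ (t + 1) * r) : ∑' t, f t = r := by
  have hg : Summable (fun t : ℕ => ((1:ℝ)/2) ^ t) :=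
    summable_geometric_of_lt_one (by norm_num) (by norm_num)
  have hs : Summable (fun t => f (t + 1)) := by
    have : (fun t : ℕ => f (t + 1)) = fun t : ℕ => (r/2) * (1/2 : ℝ)^t := by
      funext t; rw [h]; ring
    rw [this]; exact hg.mul_left _
  have hsf : Summable f := (summable_nat_add_iff 1).mp hs
  rw [Summable.tsum_eq_zero_add hsf, h0, zero_add]
  have : (fun t : ℕ => f (t + 1)) = fun t : ℕ => (r/2) * (1/2 : ℝ)^t := by
    funext t; rw [h]; ring
  rw [this, tsum_mul_left, tsum_geometric_of_lt_one (by norm_num) (by norm_num)]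
  norm_num

lemma val_formula (π : Fin 5 → Fin 2 → ℝ) (D d : Fin 5 → ℝ) (r : ℝ)
    (h0 : ∑ s, D s * ∑ a, π s a * myρ s a = 0)
    (h1 : distAt π myP D 1 = d)
    (hstat : ∀ s', ∑ s, d s * indTrans π myP s s' = d s')
    (hr : ∑ s, d s * ∑ a, π s a * myρ s a = r) :
    agentVal π myP myρ (1/2) D = r / 2 := by
  have hd : ∀ t, distAt π myP D (t + 1) = d := by
    intro t
    induction t with
    | zero => exact h1
    | succ n ih =>
      funext s'
      show ∑ s, distAt π myP D (n + 1) s * indTrans π myP s s' = d s'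
      rw [ih]; exact hstat s'
  have key : ∑' t : ℕ, (1/2 : ℝ) ^ t * ∑ s, distAt π myP D t s * ∑ a, π s a * myρ s a = r := by
    refine tsum_key r _ ?_ ?_
    · simpa [distAt] using h0
    · intro t; rw [hd t, hr]
  unfold agentVal
  rw [key]; ring

lemma detsum (g : Fin 2 → ℝ) (x : Fin 2) :
    ∑ a, (if a = x then (1:ℝ) else 0) * g a = g x := by
  fin_cases x <;> simp [Fin.sum_univ_two]

lemma detrow (x : Fin 2) : ∑ a : Fin 2, (if a = x then (1:ℝ) else 0) = 1 := by
  fin_cases x <;> simp [Fin.sum_univ_two]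

/-- value conditioned on majority, any proper policy -/
lemma maj_val (π : Fin 5 → Fin 2 → ℝ) (hπ : ∀ s, ∑ a, π s a = 1) :
    agentVal π myP myρ (1/2) Dmaj0 = 1/2 := by
  have h1 : ∀ s, π s 0 + π s 1 = 1 := by
    intro s; have := hπ s; simpa [Fin.sum_univ_two] using this
  have := val_formula π Dmaj0 (fun s => if s = 1 then 1 else 0) 1
    (by simp [Fin.sum_univ_five, Fin.sum_univ_two, Dmaj0, myρ])
    (by
      funext s'
      show ∑ s, Dmaj0 s * indTrans π myP s s' = _
      fin_cases s' <;>
        simp [Fin.sum_univ_five, Fin.sum_univ_two, Dmaj0, indTrans, myP] <;>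
        linarith [h1 0])
    (by
      intro s'
      fin_cases s' <;>
        simp [Fin.sum_univ_five, Fin.sum_univ_two, indTrans, myP] <;>
        linarith [h1 1])
    (by
      simp [Fin.sum_univ_five, Fin.sum_univ_two, myρ]
      linarith [h1 1])
  linarith [this]

theorem stmt12 :
    ∃ (P : Fin 5 → Fin 2 → Fin 5 → ℝ) (γ : ℝ) (ρ : Fin 5 → Fin 2 → ℝ)
      (Dmaj Dmin : Fin 5 → ℝ),
      (∀ s a s', 0 ≤ P s a s') ∧ (∀ s a, ∑ s', P s a s' = 1) ∧
      0 ≤ γ ∧ γ < 1 ∧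
      (∀ s, 0 ≤ Dmaj s) ∧ (∑ s, Dmaj s = 1) ∧
      (∀ s, 0 ≤ Dmin s) ∧ (∑ s, Dmin s = 1) ∧
      (∀ f : Fin 5 → Fin 2,
        agentVal (fun s a => if a = f s then (1 : ℝ) else 0) P ρ γ Dmaj ≠
          agentVal (fun s a => if a = f s then (1 : ℝ) else 0) P ρ γ Dmin) ∧
      (∃ π : Fin 5 → Fin 2 → ℝ, (∀ s a, 0 ≤ π s a) ∧ (∀ s, ∑ a, π s a = 1) ∧
        agentVal π P ρ γ Dmaj = agentVal π P ρ γ Dmin) := by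
  refine ⟨myP, 1/2, myρ, Dmaj0, Dmin0, ?_, ?_, by norm_num, by norm_num, ?_, ?_, ?_, ?_, ?_, ?_⟩
  · intro s a s'
    fin_cases s <;> fin_cases a <;> fin_cases s' <;> simp [myP] <;> norm_num
  · intro s a
    fin_cases s <;> fin_cases a <;> simp [myP, Fin.sum_univ_five]
  · intro s; fin_cases s <;> simp [Dmaj0] <;> norm_num
  · simp [Dmaj0, Fin.sum_univ_five]
  · intro s; fin_cases s <;> simp [Dmin0] <;> norm_num
  · simp [Dmin0, Fin.sum_univ_five]
  · -- no deterministic policy works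
    intro f
    set π := fun s a => if a = f s then (1:ℝ) else 0 with hπdef
    have hmaj : agentVal π myP myρ (1/2) Dmaj0 = 1/2 :=
      maj_val π (fun s => detrow (f s))
    have hf2 : f 2 = 0 ∨ f 2 = 1 := by omega
    rcases hf2 with h | h
    · have hmin : agentVal π myP myρ (1/2) Dmin0 = 0 := by
        have := val_formula π Dmin0 (fun s => if s = 3 then 1 else 0) 0
          (by simp [Fin.sum_univ_five, Fin.sum_univ_two, Dmin0, myρ, hπdef])
          (by
            funext s'
            show ∑ s, Dmin0 s * indTrans π myP s s' = _
            fin_cases s' <;>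
              simp [Fin.sum_univ_five, Dmin0, indTrans, hπdef, detsum, myP, h])
          (by
            intro s'
            fin_cases s' <;>
              simp [Fin.sum_univ_five, indTrans, hπdef, detsum, myP])
          (by simp [Fin.sum_univ_five, Fin.sum_univ_two, myρ, hπdef])
        linarith [this]
      rw [hmaj, hmin]; norm_num
    · have hmin : agentVal π myP myρ (1/2) Dmin0 = 1 := by
        have := val_formula π Dmin0 (fun s => if s = 4 then 1 else 0) 2
          (by simp [Fin.sum_univ_five, Fin.sum_univ_two, Dmin0, myρ, hπdef])
          (by
            funext s'
            show ∑ s, Dmin0 s * indTrans π myP s s' = _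
            fin_cases s' <;>
              simp [Fin.sum_univ_five, Dmin0, indTrans, hπdef, detsum, myP, h])
          (by
            intro s'
            fin_cases s' <;>
              simp [Fin.sum_univ_five, indTrans, hπdef, detsum, myP])
          (by
            simp [Fin.sum_univ_five, Fin.sum_univ_two, myρ, hπdef, detrow])
        linarith [this]
      rw [hmaj, hmin]; norm_num
  · -- stochastic policy
    refine ⟨fun _ _ => 1/2, fun s a => by norm_num, fun s => by norm_num [Fin.sum_univ_two], ?_⟩
    have hmaj : agentVal (fun _ _ => (1:ℝ)/2) myP myρ (1/2) Dmaj0 = 1/2 :=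
      maj_val _ (fun s => by norm_num [Fin.sum_univ_two])
    have hmin : agentVal (fun _ _ => (1:ℝ)/2) myP myρ (1/2) Dmin0 = 1/2 := by
      have := val_formula (fun _ _ => (1:ℝ)/2) Dmin0
        (![0, 0, 0, 1/2, 1/2]) 1
        (by simp [Fin.sum_univ_five, Fin.sum_univ_two, Dmin0, myρ])
        (by
          funext s'
          show ∑ s, Dmin0 s * indTrans _ myP s s' = _
          fin_cases s' <;>
            simp [Fin.sum_univ_five, Fin.sum_univ_two, Dmin0, indTrans, myP] <;> norm_num)
        (by
          intro s'
          fin_cases s' <;>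
            simp [Fin.sum_univ_five, Fin.sum_univ_two, indTrans, myP] <;> norm_num)
        (by
          have e1 : ((3:Fin 5) = 1) = False := by simp
          have e2 : ((3:Fin 5) = 4) = False := by simp
          have e3 : ((4:Fin 5) = 1) = False := by simp
          have e4 : ((2:Fin 5) = 1) = False := by simp
          have e5 : ((2:Fin 5) = 4) = False := by simp
          have e6 : (![0, 0, 0, 1/2, 1/2] : Fin 5 → ℝ) 4 = 1/2 := rfl
          norm_num [Fin.sum_univ_five, Fin.sum_univ_two, myρ, e1, e2, e3, e4, e5, e6])
      linarith [this]
    rw [hmaj, hmin]
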